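/- Let j be a positive integer, let β = (s/t)·x + c where s ∈ ℤ, t is a positive integer and c ∈ F (so β ∈ F(x) ⊆ E, using ℚ ⊆ F), and suppose α = σ_x^t(γ) − γ for some γ ∈ E. Then the rational function α/(y − β)^j is (σ_x,σ_y)-summable in E(y). -/

import Mathlib

/-- `E`, an algebraic closure of the rational function field `F(x)`. -/
noncomputable abbrev Ebar (F : Type*) [Field F] : Type _ := AlgebraicClosure (RatFunc F)

/-- The element `x` of `F(x) ⊆ E`. -/
noncomputable abbrev Ebar.x (F : Type*) [Field F] : Ebar F :=
  algebraMap (RatFunc F) (Ebar F) RatFunc.X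

/-- The embedding of a constant `a ∈ F` into `E`. -/
noncomputable abbrev Ebar.c (F : Type*) [Field F] (a : F) : Ebar F :=
  algebraMap (RatFunc F) (Ebar F) (RatFunc.C a)

/-- Let `F` be an algebraically closed field of characteristic zero, `E` the algebraic
closure of `F(x)`, `σ_x` an automorphism of `E` fixing `F` with `σ_x(x) = x + 1`,
extended coefficientwise to `E(y)` (denoted `Sx`), and `σ_y` the `E`-automorphism of
`E(y)` with `σ_y(y) = y + 1`.  If `β = (s/t)·x + c` with `s ∈ ℤ`, `t` a positive
integer, `c ∈ F`, and `α = σ_x^t(γ) - γ` for some `γ ∈ E`, then for every positive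
integer `j` the rational function `α/(y - β)^j` is `(σ_x,σ_y)`-summable in `E(y)`. -/
theorem simple_fraction_shift_summable
    (F : Type*) [Field F] [IsAlgClosed F] [CharZero F]
    (σx : Ebar F ≃+* Ebar F)
    (hσxF : ∀ a : F, σx (Ebar.c F a) = Ebar.c F a)
    (hσxx : σx (Ebar.x F) = Ebar.x F + 1)
    (Sx : RatFunc (Ebar F) ≃+* RatFunc (Ebar F))
    (hSxC : ∀ a : Ebar F, Sx (RatFunc.C a) = RatFunc.C (σx a))
    (hSxX : Sx RatFunc.X = RatFunc.X)
    (σy : RatFunc (Ebar F) ≃ₐ[Ebar F] RatFunc (Ebar F))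
    (hσy : σy RatFunc.X = RatFunc.X + 1)
    (j : ℕ) (hj : 0 < j) (s : ℤ) (t : ℕ) (ht : 0 < t) (c : F)
    (β α : Ebar F)
    (hβ : β = ((s : Ebar F) / (t : Ebar F)) * Ebar.x F + Ebar.c F c)
    (hα : ∃ γ : Ebar F, α = (σx ^ t) γ - γ) :
    ∃ g h : RatFunc (Ebar F),
      RatFunc.C α / (RatFunc.X - RatFunc.C β) ^ j = Sx g - g + σy h - h := by
  classical
  obtain ⟨γ, hγ⟩ := hα
  haveI : CharZero (RatFunc F) :=
    charZero_of_injective_algebraMap (algebraMap F (RatFunc F)).injective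
  haveI : CharZero (Ebar F) :=
    charZero_of_injective_algebraMap (algebraMap (RatFunc F) (Ebar F)).injective
  have htne : (t : Ebar F) ≠ 0 := Nat.cast_ne_zero.mpr ht.ne'
  set δ : Ebar F := (σx ^ t) γ with hδ
  -- σx β = β + s/t
  have hσβ : σx β = β + (s : Ebar F) / (t : Ebar F) := by
    rw [hβ, map_add, map_mul, map_div₀, map_intCast, map_natCast, hσxx, hσxF]
    ring
  -- (σx ^ k) β = β + k * (s/t)
  have hσkβ : ∀ k : ℕ, (σx ^ k) β = β + (k : Ebar F) * ((s : Ebar F) / (t : Ebar F)) := by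
    intro k
    induction k with
    | zero => simp only [pow_zero, Nat.cast_zero, zero_mul, add_zero]; rfl
    | succ n ih =>
        have : (σx ^ (n + 1)) β = σx ((σx ^ n) β) := by rw [pow_succ']; rfl
        rw [this, ih, map_add, hσβ, map_mul, map_natCast, map_div₀, map_intCast, map_natCast]
        push_cast
        ring
  have hβt : (σx ^ t) β = β + (s : Ebar F) := by
    rw [hσkβ t]
    field_simp
  -- the "x-part" telescoping terms
  set u : ℕ → RatFunc (Ebar F) := fun k =>
    RatFunc.C ((σx ^ k) γ) / (RatFunc.X - RatFunc.C ((σx ^ k) β)) ^ j with hu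
  have hSxu : ∀ k, Sx (u k) = u (k + 1) := by
    intro k
    have h1 : (σx ^ (k + 1)) γ = σx ((σx ^ k) γ) := by rw [pow_succ']; rfl
    have h2 : (σx ^ (k + 1)) β = σx ((σx ^ k) β) := by rw [pow_succ']; rfl
    simp only [hu, map_div₀, map_pow, map_sub, hSxC, hSxX, h1, h2]
  set g : RatFunc (Ebar F) := ∑ k ∈ Finset.range t, u k with hg
  have hSxg : Sx g - g = u t - u 0 := by
    have : Sx g = ∑ k ∈ Finset.range t, u (k + 1) := by
      rw [hg, map_sum]
      exact Finset.sum_congr rfl fun k _ => hSxu k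
    rw [this, hg, ← Finset.sum_sub_distrib, Finset.sum_range_sub]
  -- the "y-part" telescoping terms
  set v : ℤ → RatFunc (Ebar F) := fun i =>
    RatFunc.C δ / (RatFunc.X - RatFunc.C (β + (i : Ebar F))) ^ j with hv
  have hσyC : ∀ a : Ebar F, σy (RatFunc.C a) = RatFunc.C a := by
    intro a
    rw [← RatFunc.algebraMap_eq_C]
    exact σy.commutes a
  have hσyv : ∀ i : ℤ, σy (v i) = v (i - 1) := by
    intro i
    simp only [hv, map_div₀, map_pow, map_sub, hσy, hσyC]
    congr 2
    have : ((i - 1 : ℤ) : Ebar F) = (i : Ebar F) - 1 := by push_cast; ring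
    rw [this, map_add, map_add, map_sub, map_one]
    ring
  -- construct h with σy h - h = v 0 - v s
  have hyexists : ∃ h : RatFunc (Ebar F), σy h - h = v 0 - v s := by
    rcases le_or_gt 0 s with hs | hs
    · refine ⟨∑ i ∈ Finset.range s.toNat, v (i + 1), ?_⟩
      have hmap : σy (∑ i ∈ Finset.range s.toNat, v (i + 1))
          = ∑ i ∈ Finset.range s.toNat, v i := by
        rw [map_sum]
        refine Finset.sum_congr rfl fun i _ => ?_
        rw [hσyv]
        congr 1
        ring
      rw [hmap, ← Finset.sum_sub_distrib]
      have key := Finset.sum_range_sub' (f := fun i : ℕ => v i) s.toNat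
      simp only [Nat.cast_add, Nat.cast_one, Nat.cast_zero] at key
      rw [Int.toNat_of_nonneg hs] at key
      rw [key]
    · refine ⟨-∑ i ∈ Finset.range (-s).toNat, v (-i), ?_⟩
      have hmap : σy (-∑ i ∈ Finset.range (-s).toNat, v (-i))
          = -∑ i ∈ Finset.range (-s).toNat, v (-(i + 1)) := by
        rw [map_neg, map_sum]
        congr 1
        refine Finset.sum_congr rfl fun i _ => ?_
        rw [hσyv]
        congr 1
        ring
      rw [hmap, neg_sub_neg, ← Finset.sum_sub_distrib]
      have key := Finset.sum_range_sub' (f := fun i : ℕ => v (-i)) (-s).toNat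
      simp only [Nat.cast_add, Nat.cast_one, Nat.cast_zero, neg_zero] at key
      rw [Int.toNat_of_nonneg (by omega : (0:ℤ) ≤ -s), neg_neg] at key
      rw [key]
  obtain ⟨h, hh⟩ := hyexists
  refine ⟨g, h, ?_⟩
  have hu0 : u 0 = RatFunc.C γ / (RatFunc.X - RatFunc.C β) ^ j := by
    simp only [hu, pow_zero]; rfl
  have hut : u t = RatFunc.C δ / (RatFunc.X - RatFunc.C (β + (s : Ebar F))) ^ j := by
    simp only [hu, hβt, hδ]
  have hv0 : v 0 = RatFunc.C δ / (RatFunc.X - RatFunc.C β) ^ j := by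
    simp [hv]
  have hvs : v s = RatFunc.C δ / (RatFunc.X - RatFunc.C (β + (s : Ebar F))) ^ j := by
    simp [hv]
  have : Sx g - g + σy h - h = (u t - u 0) + (v 0 - v s) := by
    rw [← hSxg, ← hh]; ring
  rw [this, hu0, hut, hv0, hvs, hγ]
  rw [map_sub, sub_div]
  ring
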